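/- Let G = (ℕ, ℓ) be a total pair where ℓ : ℕ* × ℕ → ℕ is an injective total recursive function (under a fixed effective encoding of finite subsets of ℕ and pairs) whose range is decidable. Then for every closed λ-term M in β-normal form, the interpretation ⟦M⟧^G is a decidable subset of ℕ. -/

import Mathlib

universe u v

/-- Untyped λ-terms in de Bruijn notation (over the countably infinite
supply of variables `ℕ`). -/
inductive Term : Type
  | var : ℕ → Term
  | app : Term → Term → Term
  | lam : Term → Term
  deriving DecidableEq

namespace Term

/-- Shift the free variables `≥ d` up by one. -/
def lift (d : ℕ) : Term → Term
  | var n => if n < d then var n else var (n + 1)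
  | app M N => app (lift d M) (lift d N)
  | lam M => lam (lift (d + 1) M)

/-- Capture-avoiding substitution of `N` for the free variable `k`. -/
def subst : Term → ℕ → Term → Term
  | var n, k, N => if n = k then N else if k < n then var (n - 1) else var n
  | app P Q, k, N => app (subst P k N) (subst Q k N)
  | lam P, k, N => lam (subst P (k + 1) (lift 0 N))

/-- One-step β-reduction. -/
inductive Step : Term → Term → Prop
  | beta (M N : Term) : Step (app (lam M) N) (subst M 0 N)
  | appL {M M' : Term} (N : Term) : Step M M' → Step (app M N) (app M' N)
  | appR (M : Term) {N N' : Term} : Step N N' → Step (app M N) (app M N')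
  | abs {M M' : Term} : Step M M' → Step (lam M) (lam M')

/-- β-conversion: the least equivalence relation containing one-step β-reduction. -/
inductive BetaConv : Term → Term → Prop
  | of {M N : Term} : Step M N → BetaConv M N
  | refl (M : Term) : BetaConv M M
  | symm {M N : Term} : BetaConv M N → BetaConv N M
  | trans {M N P : Term} : BetaConv M N → BetaConv N P → BetaConv M P

/-- All free variables are `< d`. -/
def BoundedBy : Term → ℕ → Prop
  | var n, d => n < d
  | app M N, d => BoundedBy M d ∧ BoundedBy N d
  | lam M, d => BoundedBy M (d + 1)

/-- Closed λ-terms. -/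
def Closed (M : Term) : Prop := BoundedBy M 0

/-- Terms of the form `y M₁ ⋯ Mₖ` (a variable applied to arguments). -/
inductive IsVarApp : Term → Prop
  | var (n : ℕ) : IsVarApp (var n)
  | app {M : Term} (N : Term) : IsVarApp M → IsVarApp (app M N)

/-- Head normal forms `λx₁…xₙ. y M₁ ⋯ Mₖ`. -/
inductive IsHnf : Term → Prop
  | head {M : Term} : IsVarApp M → IsHnf M
  | abs {M : Term} : IsHnf M → IsHnf (lam M)

/-- A λ-term is solvable if it is β-convertible to a head normal form. -/
def Solvable (M : Term) : Prop := ∃ N, BetaConv M N ∧ IsHnf N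

/-- Unsolvable λ-terms. -/
def Unsolvable (M : Term) : Prop := ¬ Solvable M

/-- β-normal forms: terms containing no β-redex. -/
def IsNormal : Term → Prop
  | var _ => True
  | lam M => IsNormal M
  | app M N => (∀ P, M ≠ lam P) ∧ IsNormal M ∧ IsNormal N

/-- A fixed effective bijective Gödel numbering of λ-terms. -/
def code : Term → ℕ
  | var n => 3 * n
  | app M N => 3 * Nat.pair (code M) (code N) + 1
  | lam M => 3 * code M + 2

/-- `δ = λx.xx`. -/
def delta : Term := lam (app (var 0) (var 0))

/-- `Ω = (λx.xx)(λx.xx)`. -/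
def Omega : Term := app delta delta

/-- `I = λx.x`. -/
def Idt : Term := lam (var 0)

end Term

open Term

/-- A set of λ-terms is r.e. if its set of Gödel codes is r.e. -/
def TermSetRe (V : Set Term) : Prop := REPred fun n : ℕ => ∃ M ∈ V, code M = n

/-- A set of λ-terms is co-r.e. if its set of Gödel codes is co-r.e.; since the
numbering is bijective this means that the code set of the complement is r.e. -/
def TermSetCoRe (V : Set Term) : Prop := TermSetRe Vᶜ

/-- β-co-r.e. sets: co-r.e. sets of λ-terms closed under β-conversion. -/
def BetaCoRe (V : Set Term) : Prop :=
  (∀ M N, M ∈ V → BetaConv M N → N ∈ V) ∧ TermSetCoRe V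

/-- A set of pairs of λ-terms is r.e. if the corresponding set of codes of
pairs is r.e. -/
def PairsRe (T : Set (Term × Term)) : Prop :=
  REPred fun n : ℕ => ∃ p ∈ T, Nat.pair (code p.1) (code p.2) = n

/-- λ-theories: congruences on Λ containing β-conversion. -/
def IsLambdaTheory (T : Term → Term → Prop) : Prop :=
  Equivalence T ∧
  (∀ M M' N N', T M M' → T N N' → T (Term.app M N) (Term.app M' N')) ∧
  (∀ M M', T M M' → T (Term.lam M) (Term.lam M')) ∧
  (∀ M N, BetaConv M N → T M N)

/-- Partial pairs (as raw data): a carrier set together with a partial map `j`,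
given as an `Option`-valued map on pairs of a subset and an element. -/
structure PrePair (α : Type u) : Type u where
  carrier : Set α
  j : Set α × α → Option α

namespace PrePair

variable {α : Type u}

/-- The defining conditions of a partial pair: the carrier is non-empty and `j`
is a partial injection `A* × A ⇀ A`. -/
def Valid (P : PrePair α) : Prop :=
  P.carrier.Nonempty ∧
  (∀ a x y, P.j (a, x) = some y →
      a.Finite ∧ a ⊆ P.carrier ∧ x ∈ P.carrier ∧ y ∈ P.carrier) ∧
  (∀ p q y, P.j p = some y → P.j q = some y → p = q)

/-- Total pairs: `j` is defined on every pair of a finite subset of the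
carrier and an element of the carrier. -/
def Total (P : PrePair α) : Prop :=
  ∀ a x, a.Finite → a ⊆ P.carrier → x ∈ P.carrier → ∃ y, P.j (a, x) = some y

/-- Webs of graph models: total pairs with infinite carrier. -/
def IsGraphModel (P : PrePair α) : Prop := P.Valid ∧ P.Total ∧ P.carrier.Infinite

/-- The subpair relation `A ⊑ B`. -/
def Subpair (P Q : PrePair α) : Prop :=
  P.carrier ⊆ Q.carrier ∧ ∀ p y, P.j p = some y → Q.j p = some y

end PrePair

/-- Consing a value onto an environment (de Bruijn style). -/
def envCons {α : Type u} (s : Set α) (ρ : ℕ → Set α) : ℕ → Set α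
  | 0 => s
  | n + 1 => ρ n

/-- The interpretation of a λ-term with respect to a partial pair and an
environment. -/
def interp {α : Type u} (P : PrePair α) : Term → (ℕ → Set α) → Set α
  | Term.var n, ρ => ρ n
  | Term.app M N, ρ =>
      {y | ∃ a : Set α, a.Finite ∧ a ⊆ interp P N ρ ∧
        ∃ z, P.j (a, y) = some z ∧ z ∈ interp P M ρ}
  | Term.lam M, ρ =>
      {y | ∃ (a : Set α) (x : α), a.Finite ∧ P.j (a, x) = some y ∧
        x ∈ interp P M (envCons a ρ)}

/-- The interpretation of a closed λ-term. -/
def interpC {α : Type u} (P : PrePair α) (M : Term) : Set α :=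
  interp P M fun _ => (∅ : Set α)

/-- The order theory of (the graph model generated by) a pair. -/
def ThLe {α : Type u} (P : PrePair α) : Set (Term × Term) :=
  {p | ∀ ρ : ℕ → Set α, (∀ n, ρ n ⊆ P.carrier) → interp P p.1 ρ ⊆ interp P p.2 ρ}

/-- The equational theory of (the graph model generated by) a pair. -/
def Th {α : Type u} (P : PrePair α) : Set (Term × Term) :=
  {p | ∀ ρ : ℕ → Set α, (∀ n, ρ n ⊆ P.carrier) → interp P p.1 ρ = interp P p.2 ρ}

/-- Morphisms of partial pairs. -/
def IsMorphism {α : Type u} {β : Type v} (P : PrePair α) (Q : PrePair β)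
    (f : α → β) : Prop :=
  Set.MapsTo f P.carrier Q.carrier ∧
  ∀ a x y, a ⊆ P.carrier → x ∈ P.carrier → P.j (a, x) = some y →
    Q.j (f '' a, f x) = some (f y)

/-- Isomorphisms of partial pairs: morphisms which are bijections between the
carriers and whose inverse is also a morphism. -/
def IsIso {α : Type u} {β : Type v} (P : PrePair α) (Q : PrePair β)
    (f : α → β) : Prop :=
  IsMorphism P Q f ∧
  ∃ g : β → α, IsMorphism Q P g ∧
    (∀ x ∈ P.carrier, g (f x) = x) ∧ ∀ y ∈ Q.carrier, f (g y) = y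

/-- The ambient type of the free completion: formal copies `base x` of the
original elements together with formal pairs `node`. -/
inductive FC (α : Type u) : Type u
  | base : α → FC α
  | node : List (FC α) → FC α → FC α

namespace FC

variable {α : Type u}

open scoped Classical

/-- A canonical list enumerating a finite set. -/
noncomputable def listOf (s : Set (FC α)) : List (FC α) :=
  if h : s.Finite then h.toFinset.toList else []

/-- The copy of the original carrier inside `FC α`. -/
def baseSet (P : PrePair α) : Set (FC α) := base '' P.carrier

/-- `(a, x)` is the copy of a pair in the domain of `j`. -/
def IsOldDom (P : PrePair α) (a : Set (FC α)) (x : FC α) : Prop :=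
  ∃ (a₀ : Set α) (x₀ : α), a = base '' a₀ ∧ x = base x₀ ∧ (P.j (a₀, x₀)).isSome

/-- The increasing stages `Aₙ` of the free completion:
`A₀ = A` and `A_{n+1} = A ∪ ((Aₙ* × Aₙ) ∖ dom j)`. -/
def stage (P : PrePair α) : ℕ → Set (FC α)
  | 0 => baseSet P
  | n + 1 => baseSet P ∪
      {t | ∃ (a : Set (FC α)) (x : FC α), a.Finite ∧ a ⊆ stage P n ∧
        x ∈ stage P n ∧ ¬ IsOldDom P a x ∧ t = node (listOf a) x}

/-- The carrier `Ā = ⋃ₙ Aₙ` of the free completion. -/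
def compCarrier (P : PrePair α) : Set (FC α) := ⋃ n, stage P n

/-- `y` is the copy of the old value `j (a₀, x₀)`, where `(a, x)` is the copy
of `(a₀, x₀) ∈ dom j`. -/
def OldVal (P : PrePair α) (a : Set (FC α)) (x y : FC α) : Prop :=
  ∃ (a₀ : Set α) (x₀ y₀ : α), a = base '' a₀ ∧ x = base x₀ ∧
    P.j (a₀, x₀) = some y₀ ∧ y = base y₀

/-- The total injection `j̄` of the free completion: it extends `j` and sends
every other pair `(a, α)` of the completion to (the formal copy of) itself. -/
noncomputable def jbar (P : PrePair α) (p : Set (FC α) × FC α) : Option (FC α) :=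
  if p.1.Finite ∧ p.1 ⊆ compCarrier P ∧ p.2 ∈ compCarrier P then
    if h : ∃ y, OldVal P p.1 p.2 y then some h.choose
    else some (node (listOf p.1) p.2)
  else none

end FC

/-- The free completion `Ā` of a partial pair `A`, as a total pair on `FC α`. -/
noncomputable def completion {α : Type u} (P : PrePair α) : PrePair (FC α) :=
  ⟨FC.compCarrier P, FC.jbar P⟩

/-- The fixed effective encoding of finite subsets of `ℕ`. -/
def encF (s : Finset ℕ) : ℕ := s.sum fun i => 2 ^ i

/-- A partial pair on `ℕ` whose carrier is a decidable set and whose map `j` is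
partial recursive with decidable domain (under the fixed effective encoding of
finite sets and pairs). -/
def ConcreteWE (Q : PrePair ℕ) : Prop :=
  ComputablePred (· ∈ Q.carrier) ∧
  ∃ f : ℕ →. ℕ, Nat.Partrec f ∧ ComputablePred (fun n => (f n).Dom) ∧
    ∀ (a : Finset ℕ) (x y : ℕ), Q.j (↑a, x) = some y ↔ y ∈ f (Nat.pair (encF a) x)

/-- The range of `j` is decidable. -/
def ConcreteRange (Q : PrePair ℕ) : Prop :=
  ComputablePred fun y => ∃ p, Q.j p = some y

/-- Weakly effective partial pairs: partial pairs isomorphic to a partial pair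
on `ℕ` with decidable carrier whose `j` is partial recursive with decidable
domain. -/
def WeaklyEffective {α : Type u} (P : PrePair α) : Prop :=
  ∃ Q : PrePair ℕ, ConcreteWE Q ∧ ∃ f : α → ℕ, IsIso P Q f

/-- Effective partial pairs: weakly effective via a pair whose `j` moreover has
decidable range. -/
def EffectivePair {α : Type u} (P : PrePair α) : Prop :=
  ∃ Q : PrePair ℕ, ConcreteWE Q ∧ ConcreteRange Q ∧ ∃ f : α → ℕ, IsIso P Q f

/-- Effective total pairs: total pairs isomorphic to some `(ℕ, ℓ)` with `ℓ`
total recursive, injective and with decidable range. -/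
def EffectiveTotalPair {α : Type u} (P : PrePair α) : Prop :=
  ∃ Q : PrePair ℕ, Q.carrier = Set.univ ∧
    (∃ f : ℕ → ℕ, Computable f ∧ Function.Injective f ∧
      ComputablePred (fun y => ∃ n, f n = y) ∧
      ∀ (a : Finset ℕ) (x : ℕ), Q.j (↑a, x) = some (f (Nat.pair (encF a) x))) ∧
    ∃ h : α → ℕ, IsIso P Q h

namespace NIDaux




theorem mem_bitIndices_iff' (e : ℕ) : ∀ i, i ∈ e.bitIndices ↔ e.testBit i = true := by
  induction e using Nat.binaryRec with
  | zero => simp [Nat.zero_testBit]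
  | bit b n ih =>
    intro i
    cases b with
    | false =>
      rw [Nat.bitIndices_bit_false]
      cases i with
      | zero => rw [Nat.testBit_bit_zero]; simp
      | succ i => rw [Nat.testBit_bit_succ]; simp [ih]
    | true =>
      rw [Nat.bitIndices_bit_true]
      cases i with
      | zero => rw [Nat.testBit_bit_zero]; simp
      | succ i => rw [Nat.testBit_bit_succ]; simp [ih]

theorem mem_bitIndices_iff {e i : ℕ} : i ∈ e.bitIndices ↔ e.testBit i = true :=
  mem_bitIndices_iff' e i

theorem lt_of_testBit {e i : ℕ} (h : e.testBit i = true) : i < e := by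
  by_contra hle
  push_neg at hle
  have h2 : e < 2 ^ i := lt_of_le_of_lt hle Nat.lt_two_pow_self
  rw [Nat.testBit_eq_false_of_lt h2] at h
  exact Bool.false_ne_true h

theorem testBit_encF (a : Finset ℕ) (i : ℕ) : (encF a).testBit i = true ↔ i ∈ a := by
  have hsum : encF a = ((a.sort (·≤·)).map (fun i => 2 ^ i)).sum := by
    have h := Finset.sort_perm_toList (α := ℕ) (r := (·≤·)) a
    rw [encF, (h.map (fun i => 2 ^ i)).sum_eq]
    simp only [Finset.toList, Finset.sum, Multiset.sum_toList, ← Multiset.sum_coe,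
      ← Multiset.map_coe, Multiset.coe_toList]
  have hbi : (encF a).bitIndices = a.sort (·≤·) := by
    rw [hsum, Nat.bitIndices_twoPowsum (Finset.sortedLT_sort a)]
  rw [← mem_bitIndices_iff, hbi, Finset.mem_sort]

/-- decode a natural number to the finset of its bit indices -/
def decFin (e : ℕ) : Finset ℕ := (Finset.range e).filter (fun i => e.testBit i = true)

theorem mem_decFin {e i : ℕ} : i ∈ decFin e ↔ e.testBit i = true := by
  simp only [decFin, Finset.mem_filter, Finset.mem_range]
  exact ⟨fun h => h.2, fun h => ⟨lt_of_testBit h, h⟩⟩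

theorem encF_decFin (e : ℕ) : encF (decFin e) = e := by
  have h1 : decFin e = e.bitIndices.toFinset := by
    ext i
    simp [mem_decFin, List.mem_toFinset, mem_bitIndices_iff]
  rw [h1, encF, List.sum_toFinset _ (Nat.bitIndices_sorted.nodup)]
  exact Nat.twoPowSum_bitIndices e

theorem decFin_encF (a : Finset ℕ) : decFin (encF a) = a := by
  ext i; rw [mem_decFin, testBit_encF]



open Classical in
/-- Boolean range test. -/
noncomputable def rb (f : ℕ → ℕ) (y : ℕ) : Bool := decide (∃ n, f n = y)

open Classical in
/-- inverse of `f`, by unbounded search (0 if not in range). -/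
noncomputable def finv (f : ℕ → ℕ) (y : ℕ) : ℕ :=
  if h : ∃ n, f n = y then Nat.find h else 0

theorem rb_eq_true {f : ℕ → ℕ} {y : ℕ} : rb f y = true ↔ ∃ n, f n = y := by
  simp [rb]

theorem finv_spec {f : ℕ → ℕ} {y : ℕ} (h : ∃ n, f n = y) : f (finv f y) = y := by
  rw [finv, dif_pos h]; exact Nat.find_spec h

theorem finv_eq {f : ℕ → ℕ} (hinj : Function.Injective f) (n : ℕ) :
    finv f (f n) = n := by
  have h : ∃ m, f m = f n := ⟨n, rfl⟩
  exact hinj (finv_spec h)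

/-- bounded forall -/
def bAll (p : ℕ → Bool) : ℕ → Bool
  | 0 => true
  | n + 1 => bAll p n && p n

/-- bounded exists -/
def bAny (p : ℕ → Bool) : ℕ → Bool
  | 0 => false
  | n + 1 => bAny p n || p n

/-- bounded max -/
def bMax (g : ℕ → ℕ) : ℕ → ℕ
  | 0 => 0
  | n + 1 => max (bMax g n) (g n)

theorem bAll_iff (p : ℕ → Bool) : ∀ n, bAll p n = true ↔ ∀ i < n, p i = true := by
  intro n
  induction n with
  | zero => simp [bAll]
  | succ n ih =>
    simp only [bAll, Bool.and_eq_true, ih]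
    constructor
    · rintro ⟨h1, h2⟩ i hi
      rcases Nat.lt_succ_iff_lt_or_eq.1 hi with h | rfl
      · exact h1 i h
      · exact h2
    · intro h
      exact ⟨fun i hi => h i (Nat.lt_succ_of_lt hi), h n (Nat.lt_succ_self n)⟩

theorem bAny_iff (p : ℕ → Bool) : ∀ n, bAny p n = true ↔ ∃ i, i < n ∧ p i = true := by
  intro n
  induction n with
  | zero => simp [bAny]
  | succ n ih =>
    simp only [bAny, Bool.or_eq_true, ih]
    constructor
    · rintro (⟨i, hi, hp⟩ | hp)
      · exact ⟨i, Nat.lt_succ_of_lt hi, hp⟩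
      · exact ⟨n, Nat.lt_succ_self n, hp⟩
    · rintro ⟨i, hi, hp⟩
      rcases Nat.lt_succ_iff_lt_or_eq.1 hi with h | rfl
      · exact Or.inl ⟨i, h, hp⟩
      · exact Or.inr hp

theorem le_bMax (g : ℕ → ℕ) {i n : ℕ} (h : i < n) : g i ≤ bMax g n := by
  induction n with
  | zero => omega
  | succ n ih =>
    rcases Nat.lt_succ_iff_lt_or_eq.1 h with h' | rfl
    · exact le_trans (ih h') (le_max_left _ _)
    · exact le_max_right _ _

/-- Bound on elements of the interpretation of a var-headed normal term. -/
noncomputable def bnd (f : ℕ → ℕ) : Term → List ℕ → ℕ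
  | .var n, L => L.getD n 0
  | .app P _, L => bMax (fun z => finv f z + 1) (bnd f P L)
  | .lam _, _ => 0

/-- Decision procedure for membership in the interpretation of a normal term. -/
noncomputable def DB (f : ℕ → ℕ) : Term → List ℕ → ℕ → Bool
  | .var n, L, y => (L.getD n 0).testBit y
  | .lam M, L, y =>
      rb f y && DB f M ((finv f y).unpair.1 :: L) (finv f y).unpair.2
  | .app P N, L, y =>
      bAny (fun z => DB f P L z && rb f z && decide ((finv f z).unpair.2 = y) &&
          bAll (fun i => !(finv f z).unpair.1.testBit i || DB f N L i)
            (finv f z).unpair.1)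
        (bnd f P L)

/-- The set of bit indices of `e`. -/
def decS (e : ℕ) : Set ℕ := {i : ℕ | e.testBit i = true}

/-- The environment coded by a list of naturals. -/
def envL (L : List ℕ) : ℕ → Set ℕ := fun n => decS (L.getD n 0)

theorem coe_decFin (e : ℕ) : (↑(decFin e) : Set ℕ) = decS e := by
  ext i; simp [mem_decFin, decS]

theorem decS_encF (a : Finset ℕ) : decS (encF a) = ↑a := by
  ext i; simp [decS, testBit_encF]

theorem envL_cons (c : ℕ) (L : List ℕ) : envL (c :: L) = envCons (decS c) (envL L) := by
  funext n
  cases n with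
  | zero => rfl
  | succ n => rfl

section Computability

open Computable in
theorem comp_bAll {α : Type*} [Primcodable α] {B : α → ℕ} {p : α → ℕ → Bool}
    (hB : Computable B) (hp : Computable₂ p) :
    Computable fun a => bAll (p a) (B a) := by
  have h : Computable₂ fun (a : α) (s : ℕ × Bool) => s.2 && p a s.1 :=
    ((Primrec.dom_bool₂ (· && ·)).to_comp.comp (snd.comp snd)
      (hp.comp fst (fst.comp snd))).to₂
  have := Computable.nat_rec hB (const true) h
  refine this.of_eq fun a => ?_
  induction B a with
  | zero => rfl
  | succ n ih => simp [bAll, ← ih]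

open Computable in
theorem comp_bAny {α : Type*} [Primcodable α] {B : α → ℕ} {p : α → ℕ → Bool}
    (hB : Computable B) (hp : Computable₂ p) :
    Computable fun a => bAny (p a) (B a) := by
  have h : Computable₂ fun (a : α) (s : ℕ × Bool) => s.2 || p a s.1 :=
    ((Primrec.dom_bool₂ (· || ·)).to_comp.comp (snd.comp snd)
      (hp.comp fst (fst.comp snd))).to₂
  have := Computable.nat_rec hB (const false) h
  refine this.of_eq fun a => ?_
  induction B a with
  | zero => rfl
  | succ n ih => simp [bAny, ← ih]

open Computable in
theorem comp_bMax {α : Type*} [Primcodable α] {B : α → ℕ} {g : α → ℕ → ℕ}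
    (hB : Computable B) (hg : Computable₂ g) :
    Computable fun a => bMax (g a) (B a) := by
  have h : Computable₂ fun (a : α) (s : ℕ × ℕ) => max s.2 (g a s.1) :=
    (Primrec.nat_max.to_comp.comp (snd.comp snd)
      (hg.comp fst (fst.comp snd))).to₂
  have := Computable.nat_rec hB (const 0) h
  refine this.of_eq fun a => ?_
  induction B a with
  | zero => rfl
  | succ n ih => simp [bMax, ← ih]

theorem comp_testBit : Computable₂ Nat.testBit := by
  have ppow : Primrec₂ (· ^ · : ℕ → ℕ → ℕ) := Primrec₂.unpaired'.1 Nat.Primrec.pow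
  have h : Primrec fun p : ℕ × ℕ => decide (p.1 / 2 ^ p.2 % 2 = 1) :=
    PrimrecPred.decide <| Primrec.eq.comp
      (Primrec.nat_mod.comp
        (Primrec.nat_div.comp Primrec.fst (ppow.comp (Primrec.const 2) Primrec.snd))
        (Primrec.const 2))
      (Primrec.const 1)
  show Computable fun p : ℕ × ℕ => p.1.testBit p.2
  exact h.to_comp.of_eq fun p => (Nat.testBit_eq_decide_div_mod_eq).symm

theorem comp_rb {f : ℕ → ℕ} (hrg : ComputablePred fun y => ∃ n, f n = y) :
    Computable (rb f) := by
  obtain ⟨rg, hrgc, hrgeq⟩ := ComputablePred.computable_iff.1 hrg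
  refine hrgc.of_eq fun y => ?_
  have h : (∃ n, f n = y) = (rg y = true) := congrFun hrgeq y
  cases hb : rg y
  · have : ¬ ∃ n, f n = y := by rw [h, hb]; simp
    simp [rb, this]
  · have : ∃ n, f n = y := h ▸ hb
    simp [rb, this]

theorem comp_finv {f : ℕ → ℕ} (hf : Computable f)
    (hrg : ComputablePred fun y => ∃ n, f n = y) : Computable (finv f) := by
  obtain ⟨rg, hrgc, hrgeq⟩ := ComputablePred.computable_iff.1 hrg
  have hiff : ∀ y, (∃ n, f n = y) ↔ rg y = true := fun y => (congrFun hrgeq y).to_iff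
  have hpred : Computable₂ fun (y n : ℕ) => (decide (f n = y) || !rg y) :=
    ((Primrec.dom_bool₂ (· || ·)).to_comp.comp
      (Primrec.eq.decide.to_comp.comp (hf.comp Computable.snd) Computable.fst)
      ((Primrec.not.to_comp).comp (hrgc.comp Computable.fst))).to₂
  have hpart : Partrec fun y => Nat.rfind fun n => Part.some (decide (f n = y) || !rg y) :=
    Partrec.rfind hpred.partrec₂
  refine Partrec.of_eq_tot hpart fun y => ?_
  refine Nat.mem_rfind.2 ?_
  by_cases h : ∃ n, f n = y
  · rw [finv, dif_pos h]
    constructor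
    · simp [Part.mem_some_iff, Nat.find_spec h]
    · intro m hm
      have h1 : ¬ f m = y := Nat.find_min h hm
      have h2 : rg y = true := (hiff y).1 h
      simp [Part.mem_some_iff, h1, h2]
  · rw [finv, dif_neg h]
    constructor
    · have h2 : rg y = false := by
        cases hb : rg y
        · rfl
        · exact absurd ((hiff y).2 hb) h
      simp [Part.mem_some_iff, h2]
    · intro m hm
      exact absurd hm (Nat.not_lt_zero m)

open Computable in
theorem comp_DB {f : ℕ → ℕ} (hf : Computable f)
    (hrg : ComputablePred fun y => ∃ n, f n = y) :
    ∀ M : Term, Computable₂ (DB f M) ∧ Computable fun L => bnd f M L := by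
  have crb := comp_rb hrg
  have cfv := comp_finv hf hrg
  have ctb := comp_testBit
  have cgetD : Computable₂ fun (L : List ℕ) (n : ℕ) => L.getD n 0 :=
    (Primrec.list_getD 0).to_comp
  have cunpair : Computable Nat.unpair := Primrec.unpair.to_comp
  intro M
  induction M with
  | var n =>
    constructor
    · exact (ctb.comp (cgetD.comp fst (const n)) snd).to₂
    · exact cgetD.comp .id (const n)
  | lam M ih =>
    constructor
    · have u : Computable fun p : List ℕ × ℕ => finv f p.2 := cfv.comp snd
      have e1 : Computable fun p : List ℕ × ℕ => (finv f p.2).unpair.1 :=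
        fst.comp (cunpair.comp u)
      have e2 : Computable fun p : List ℕ × ℕ => (finv f p.2).unpair.2 :=
        snd.comp (cunpair.comp u)
      have hdb : Computable fun p : List ℕ × ℕ =>
          DB f M ((finv f p.2).unpair.1 :: p.1) (finv f p.2).unpair.2 :=
        ih.1.comp (list_cons.comp e1 fst) e2
      have hrb' : Computable fun p : List ℕ × ℕ => rb f p.2 := crb.comp snd
      show Computable fun p : List ℕ × ℕ => DB f (Term.lam M) p.1 p.2
      exact ((Primrec.dom_bool₂ (· && ·)).to_comp.comp hrb' hdb).of_eq
        fun p => by simp [DB]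
    · exact (const 0 : Computable fun _ : List ℕ => (0:ℕ)).of_eq fun L => by simp [bnd]
  | app P N ihP ihN =>
    have hbnd : Computable fun L => bnd f (Term.app P N) L := by
      have := comp_bMax (B := fun L : List ℕ => bnd f P L)
        (g := fun (_ : List ℕ) z => finv f z + 1) ihP.2
        ((succ.comp (cfv.comp snd)).to₂)
      exact this.of_eq fun L => by simp [bnd]
    refine ⟨?_, hbnd⟩
    -- inner predicate over ((L, y), z)
    have c1 : Computable fun q : (List ℕ × ℕ) × ℕ => DB f P q.1.1 q.2 :=
      ihP.1.comp (fst.comp fst) snd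
    have c2 : Computable fun q : (List ℕ × ℕ) × ℕ => rb f q.2 := crb.comp snd
    have uz : Computable fun q : (List ℕ × ℕ) × ℕ => finv f q.2 := cfv.comp snd
    have e1 : Computable fun q : (List ℕ × ℕ) × ℕ => (finv f q.2).unpair.1 :=
      fst.comp (cunpair.comp uz)
    have e2 : Computable fun q : (List ℕ × ℕ) × ℕ => (finv f q.2).unpair.2 :=
      snd.comp (cunpair.comp uz)
    have c3 : Computable fun q : (List ℕ × ℕ) × ℕ =>
        decide ((finv f q.2).unpair.2 = q.1.2) :=
      Primrec.eq.decide.to_comp.comp e2 (snd.comp fst)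
    have c4 : Computable fun q : (List ℕ × ℕ) × ℕ =>
        bAll (fun i => !(finv f q.2).unpair.1.testBit i || DB f N q.1.1 i)
          (finv f q.2).unpair.1 := by
      refine comp_bAll e1 ?_
      show Computable fun s : ((List ℕ × ℕ) × ℕ) × ℕ =>
        (!(Nat.unpair (finv f s.1.2)).1.testBit s.2 || DB f N s.1.1.1 s.2)
      exact (Primrec.dom_bool₂ (· || ·)).to_comp.comp
        ((Primrec.not.to_comp).comp
          (ctb.comp (fst.comp (cunpair.comp (cfv.comp (snd.comp fst)))) snd))
        (ihN.1.comp (fst.comp (fst.comp fst)) snd)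
    have cAnd : Computable fun q : (List ℕ × ℕ) × ℕ =>
        DB f P q.1.1 q.2 && rb f q.2 && decide ((finv f q.2).unpair.2 = q.1.2) &&
          bAll (fun i => !(finv f q.2).unpair.1.testBit i || DB f N q.1.1 i)
            (finv f q.2).unpair.1 :=
      (Primrec.dom_bool₂ (· && ·)).to_comp.comp
        ((Primrec.dom_bool₂ (· && ·)).to_comp.comp
          ((Primrec.dom_bool₂ (· && ·)).to_comp.comp c1 c2) c3) c4
    have hA := comp_bAny (B := fun p : List ℕ × ℕ => bnd f P p.1) (ihP.2.comp fst) cAnd.to₂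
    show Computable fun p : List ℕ × ℕ => DB f (Term.app P N) p.1 p.2
    exact hA.of_eq fun p => by simp [DB]

end Computability

section Correctness

theorem DB_correct (Q : PrePair ℕ) (f : ℕ → ℕ) (hinj : Function.Injective f)
    (hj : ∀ (a : Finset ℕ) (x : ℕ), Q.j (↑a, x) = some (f (Nat.pair (encF a) x)))
    (M : Term) : ∀ L : List ℕ, Term.IsNormal M →
      (∀ y, DB f M L y = true ↔ y ∈ interp Q M (envL L)) ∧
      ((∀ P', M ≠ Term.lam P') → ∀ y ∈ interp Q M (envL L), y < bnd f M L) := by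
  induction M with
  | var n =>
    intro L _
    constructor
    · intro y
      simp only [DB, interp]
      exact Iff.rfl
    · intro _ y hy
      exact lt_of_testBit hy
  | lam M ih =>
    intro L hMn
    have hMn' : Term.IsNormal M := hMn
    constructor
    · intro y
      simp only [DB, interp, Bool.and_eq_true, Set.mem_setOf_eq]
      constructor
      · rintro ⟨hrb, hdb⟩
        have h := rb_eq_true.1 hrb
        refine ⟨↑(decFin (finv f y).unpair.1), (finv f y).unpair.2,
          Finset.finite_toSet _, ?_, ?_⟩
        · rw [hj, encF_decFin, Nat.pair_unpair, finv_spec h]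
        · have hx := ((ih ((finv f y).unpair.1 :: L) hMn').1 _).1 hdb
          rw [envL_cons] at hx
          rwa [coe_decFin]
      · rintro ⟨a, x, hfin, hja, hx⟩
        have hca : a = ↑hfin.toFinset := (Set.Finite.coe_toFinset hfin).symm
        rw [hca, hj] at hja
        have hyeq : f (Nat.pair (encF hfin.toFinset) x) = y := Option.some_inj.1 hja
        have hro : rb f y = true := rb_eq_true.2 ⟨_, hyeq⟩
        have hfe : finv f y = Nat.pair (encF hfin.toFinset) x := by
          rw [← hyeq, finv_eq hinj]
        refine ⟨hro, ?_⟩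
        rw [hfe, Nat.unpair_pair]
        apply ((ih _ hMn').1 x).2
        rw [envL_cons, decS_encF, ← hca]
        exact hx
    · intro hne
      exact absurd rfl (hne M)
  | app P N ihP ihN =>
    intro L hMn
    obtain ⟨hPl, hPn, hNn⟩ := hMn
    have ihP' := ihP L hPn
    have ihN' := ihN L hNn
    have mem_app : ∀ y, y ∈ interp Q (Term.app P N) (envL L) ↔
        ∃ a : Set ℕ, a.Finite ∧ a ⊆ interp Q N (envL L) ∧
          ∃ z, Q.j (a, y) = some z ∧ z ∈ interp Q P (envL L) := fun y => Iff.rfl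
    constructor
    · intro y
      rw [mem_app]
      simp only [DB]
      rw [bAny_iff]
      constructor
      · rintro ⟨z, hzlt, hz⟩
        simp only [Bool.and_eq_true] at hz
        obtain ⟨⟨⟨hA, hB⟩, hC⟩, hD⟩ := hz
        have hzP : z ∈ interp Q P (envL L) := (ihP'.1 z).1 hA
        have hfz : f (finv f z) = z := finv_spec (rb_eq_true.1 hB)
        have hy : (finv f z).unpair.2 = y := of_decide_eq_true hC
        refine ⟨↑(decFin (finv f z).unpair.1), Finset.finite_toSet _, ?_, z, ?_, hzP⟩
        · intro i hi
          rw [coe_decFin] at hi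
          have hi' : (finv f z).unpair.1.testBit i = true := hi
          have hilt : i < (finv f z).unpair.1 := lt_of_testBit hi'
          have hD' := (bAll_iff _ _).1 hD i hilt
          rw [hi'] at hD'
          simp only [Bool.not_true, Bool.false_or] at hD'
          exact (ihN'.1 i).1 hD'
        · rw [hj, encF_decFin, ← hy, Nat.pair_unpair, hfz]
      · rintro ⟨a, hfin, hsub, z, hjz, hzP⟩
        have hca : a = ↑hfin.toFinset := (Set.Finite.coe_toFinset hfin).symm
        rw [hca, hj] at hjz
        have hz : z = f (Nat.pair (encF hfin.toFinset) y) := (Option.some_inj.1 hjz).symm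
        have hfe : finv f z = Nat.pair (encF hfin.toFinset) y := by
          rw [hz, finv_eq hinj]
        refine ⟨z, ihP'.2 hPl z hzP, ?_⟩
        simp only [Bool.and_eq_true]
        refine ⟨⟨⟨(ihP'.1 z).2 hzP, rb_eq_true.2 ⟨_, hz.symm⟩⟩, ?_⟩, ?_⟩
        · rw [hfe, Nat.unpair_pair]
          simp
        · rw [bAll_iff]
          intro i hilt
          rw [hfe, Nat.unpair_pair]
          cases htb : (encF hfin.toFinset).testBit i
          · simp
          · simp only [Bool.not_true, Bool.false_or]
            have hiA : i ∈ hfin.toFinset := (testBit_encF _ _).1 htb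
            have hia : i ∈ a := by
              rw [hca]
              exact_mod_cast hiA
            exact (ihN'.1 i).2 (hsub hia)
    · intro _ y hy
      rw [mem_app] at hy
      obtain ⟨a, hfin, hsub, z, hjz, hzP⟩ := hy
      have hca : a = ↑hfin.toFinset := (Set.Finite.coe_toFinset hfin).symm
      rw [hca, hj] at hjz
      have hz : z = f (Nat.pair (encF hfin.toFinset) y) := (Option.some_inj.1 hjz).symm
      have hzlt : z < bnd f P L := ihP'.2 hPl z hzP
      have hfe : finv f z = Nat.pair (encF hfin.toFinset) y := by
        rw [hz, finv_eq hinj]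
      have hyle : y ≤ finv f z := by
        rw [hfe]
        exact Nat.right_le_pair _ _
      have hmax : finv f z + 1 ≤ bMax (fun w => finv f w + 1) (bnd f P L) :=
        le_bMax (fun w => finv f w + 1) hzlt
      simp only [bnd]
      omega

end Correctness

end NIDaux


/-- In the graph model generated by a total pair `(ℕ, ℓ)`
with `ℓ` total recursive, injective and with decidable range, the
interpretation of every closed β-normal term is a decidable subset of `ℕ`. -/
theorem normal_interp_decidable (Q : PrePair ℕ) (hQ : Q.Valid)
    (hcar : Q.carrier = Set.univ)
    (f : ℕ → ℕ) (hf : Computable f) (hinj : Function.Injective f)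
    (hrg : ComputablePred fun y => ∃ n, f n = y)
    (hj : ∀ (a : Finset ℕ) (x : ℕ), Q.j (↑a, x) = some (f (Nat.pair (encF a) x)))
    (M : Term) (hM : Term.Closed M) (hMn : Term.IsNormal M) :
    ComputablePred (· ∈ interpC Q M) := by
  rw [ComputablePred.computable_iff]
  refine ⟨fun y => NIDaux.DB f M [] y,
    ((NIDaux.comp_DB hf hrg M).1).comp (Computable.const []) Computable.id, ?_⟩
  funext y
  have henv : NIDaux.envL [] = fun _ : ℕ => (∅ : Set ℕ) := by
    funext n
    ext i
    simp [NIDaux.envL, NIDaux.decS, List.getD_nil, Nat.zero_testBit]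
  have h := (NIDaux.DB_correct Q f hinj hj M [] hMn).1 y
  rw [henv] at h
  exact propext h.symm
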